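/- Let G be a connected bi-block graph with blocks K_{m_i,n_i} for i = 1,…,r on n = Σ_{i=1}^r (m_i + n_i) − (r−1) vertices, let q be a nonzero indeterminate with q ≠ ±1, and let 𝓕 be the exponential distance matrix of G. Then det(𝓕) = (1−q²)^{n−1} · Π_{i=1}^r [1 − q²(m_i−1)(n_i−1)]. -/

import Mathlib

open Matrix Finset SimpleGraph

/-- The exponential distance matrix of a connected graph `G`:
the `(u,v)` entry is `q ^ d(u,v)`. -/
noncomputable def expDistMatrix {V : Type*} (G : SimpleGraph V) (q : ℝ) : Matrix V V ℝ :=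
  Matrix.of fun u v => q ^ (G.dist u v)

/-- `G` is a bi-block graph whose blocks are the complete bipartite graphs on the
vertex bipartitions `X i ∪ Y i`, `i = 1, …, r`: each block is nonempty and induces a
complete bipartite graph, every edge of `G` lies in a block, the blocks cover all
vertices, two distinct blocks share at most one vertex, and `G` is connected. -/
structure IsBiBlockGraph {V : Type*} [Fintype V] [DecidableEq V] (G : SimpleGraph V)
    (r : ℕ) (X Y : Fin r → Finset V) : Prop where
  connected : G.Connected
  nonemptyX : ∀ i, (X i).Nonempty
  nonemptyY : ∀ i, (Y i).Nonempty
  disjointXY : ∀ i, Disjoint (X i) (Y i)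
  adj_iff : ∀ u v, G.Adj u v ↔
    ∃ i, (u ∈ X i ∧ v ∈ Y i) ∨ (u ∈ Y i ∧ v ∈ X i)
  covers : ∀ v : V, ∃ i, v ∈ X i ∪ Y i
  inter_le_one : ∀ i j, i ≠ j → ((X i ∪ Y i) ∩ (X j ∪ Y j)).card ≤ 1
  card_eq : Fintype.card V + r = (∑ i, ((X i).card + (Y i).card)) + 1

/-! ### Matrix lemmas -/

section MatrixLemmas

/-- Determinant of the "reduced block" matrix via the Weinstein–Aronszajn identity. -/
lemma key_det {W : Type*} [Fintype W] [DecidableEq W] (A B : Finset W)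
    (hdisj : Disjoint A B) (hcover : ∀ w : W, w ∈ A ∨ w ∈ B) (q : ℝ) :
    (Matrix.of fun u v : W =>
      (if u = v then (1:ℝ) else if ((u ∈ A) ↔ (v ∈ A)) then q^2 else q)
        - (if u ∈ A then q^2 else q) * (if v ∈ A then q^2 else q)).det
    = (1 - q^2) ^ (Fintype.card W) * (1 - q^2 * (A.card : ℝ) * ((B.card:ℝ) - 1)) := by
  classical
  set U : Matrix W (Fin 2) ℝ := Matrix.of fun w j =>
    if j = 0 then (if w ∈ A then (1:ℝ) else 0) else (if w ∈ B then (1:ℝ) else 0) with hU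
  set K : Matrix (Fin 2) (Fin 2) ℝ := !![q^2, q; q, 0] with hK
  have hnotB : ∀ w : W, w ∈ A → w ∉ B := fun w hw hw' =>
    (Finset.disjoint_left.mp hdisj) hw hw'
  have hnotA : ∀ w : W, w ∈ B → w ∉ A := fun w hw hw' =>
    (Finset.disjoint_left.mp hdisj) hw' hw
  have hM : (Matrix.of fun u v : W =>
      (if u = v then (1:ℝ) else if ((u ∈ A) ↔ (v ∈ A)) then q^2 else q)
        - (if u ∈ A then q^2 else q) * (if v ∈ A then q^2 else q))
      = (1 - q^2) • (1 + U * (K * Uᵀ)) := by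
    ext u v
    have hKU : ∀ v, (K * Uᵀ) 0 v = q^2 * (if v ∈ A then 1 else 0) + q * (if v ∈ B then 1 else 0) := by
      intro v
      simp [hK, hU, Matrix.mul_apply, Fin.sum_univ_two, Matrix.transpose_apply]
    have hKU1 : ∀ v, (K * Uᵀ) 1 v = q * (if v ∈ A then 1 else 0) := by
      intro v
      simp [hK, hU, Matrix.mul_apply, Fin.sum_univ_two, Matrix.transpose_apply]
    have hprod : (U * (K * Uᵀ)) u v
        = (if u ∈ A then 1 else 0) * ((K * Uᵀ) 0 v) + (if u ∈ B then 1 else 0) * ((K * Uᵀ) 1 v) := by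
      simp [hU, Matrix.mul_apply, Fin.sum_univ_two]
    rw [Matrix.smul_apply, Matrix.add_apply, hprod, hKU, hKU1]
    rcases hcover u with hu | hu <;> rcases hcover v with hv | hv <;>
      by_cases huv : u = v
    · simp [huv, hv, hnotB _ hv, Matrix.one_apply]; ring
    · simp [huv, hu, hv, hnotB _ hu, hnotB _ hv, Matrix.one_apply]; ring
    · exact absurd (huv ▸ hv) (hnotB _ hu)
    · simp [huv, hu, hv, hnotB _ hu, hnotA _ hv, Matrix.one_apply]; ring
    · exact absurd (huv ▸ hv) (hnotA _ hu)
    · simp [huv, hu, hv, hnotA _ hu, hnotB _ hv, Matrix.one_apply]; ring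
    · simp [huv, hv, hnotA _ hv, Matrix.one_apply]; ring
    · simp [huv, hu, hv, hnotA _ hu, hnotA _ hv, Matrix.one_apply]; ring
  rw [hM, Matrix.det_smul, Matrix.det_one_add_mul_comm]
  have hUU : (K * Uᵀ) * U = K * !![(A.card : ℝ), 0; 0, (B.card : ℝ)] := by
    rw [Matrix.mul_assoc]
    congr 1
    ext i j
    fin_cases i <;> fin_cases j <;>
      simp [hU, Matrix.mul_apply, Matrix.transpose_apply, mul_ite, ite_and]
    · exact Finset.disjoint_iff_inter_eq_empty.mp hdisj.symm
    · exact Finset.disjoint_iff_inter_eq_empty.mp hdisj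
  rw [hUU]
  have : (1 : Matrix (Fin 2) (Fin 2) ℝ) + K * !![(A.card : ℝ), 0; 0, (B.card : ℝ)]
      = !![1 + q^2 * A.card, q * B.card; q * A.card, 1] := by
    rw [hK]
    ext i j
    fin_cases i <;> fin_cases j <;>
      simp [Matrix.mul_apply, Fin.sum_univ_two, Matrix.one_apply]
  rw [this, Matrix.det_fin_two_of]
  ring

/-- Splitting the determinant along a cut vertex. -/
lemma split_det {V : Type*} [Fintype V] [DecidableEq V] (M : Matrix V V ℝ)
    (S : Finset V) (v : V) (hv : v ∉ S)
    (hmul : ∀ x ∈ S, ∀ y, y ∉ S → M x y = M x v * M v y) :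
    M.det = (Matrix.of fun x x' : {w : V // w ∈ S} => M x x' - M x v * M v x').det
          * (Matrix.of fun y y' : {w : V // ¬ w ∈ S} => M y y').det := by
  classical
  set p : V → Prop := fun w => w ∈ S with hp
  let e : {w // p w} ⊕ {w // ¬ p w} ≃ V := Equiv.sumCompl p
  have hdet : M.det = (M.submatrix e e).det := (Matrix.det_submatrix_equiv_self e M).symm
  set A : Matrix {w // p w} {w // p w} ℝ := Matrix.of fun x x' => M x x' with hA
  set B : Matrix {w // p w} {w // ¬ p w} ℝ := Matrix.of fun x y => M x y with hB
  set C : Matrix {w // ¬ p w} {w // p w} ℝ := Matrix.of fun y x => M y x with hC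
  set D : Matrix {w // ¬ p w} {w // ¬ p w} ℝ := Matrix.of fun y y' => M y y' with hD
  have hsub : M.submatrix e e = Matrix.fromBlocks A B C D := by
    ext i j
    rcases i with i | i <;> rcases j with j | j <;> rfl
  set F : Matrix {w // p w} {w // ¬ p w} ℝ :=
    Matrix.of fun x y => - (M x v) * (if (y : V) = v then 1 else 0) with hF
  have hE : (Matrix.fromBlocks 1 F 0 1 : Matrix _ _ ℝ).det = 1 := by
    rw [Matrix.det_fromBlocks_zero₂₁, Matrix.det_one, Matrix.det_one, one_mul]
  have hFC : F * C = Matrix.of fun x x' : {w // p w} => - (M x v * M v x') := by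
    ext x x'
    rw [Matrix.mul_apply]
    rw [Finset.sum_eq_single (⟨v, hv⟩ : {w // ¬ p w})]
    · simp [hF, hC]
    · intro b _ hb
      have : (b : V) ≠ v := fun h => hb (Subtype.ext h)
      simp [hF, this]
    · simp
  have hFD : F * D = Matrix.of fun (x : {w // p w}) (y : {w // ¬ p w}) => - (M x v * M v y) := by
    ext x y
    rw [Matrix.mul_apply]
    rw [Finset.sum_eq_single (⟨v, hv⟩ : {w // ¬ p w})]
    · simp [hF, hD]
    · intro b _ hb
      have : (b : V) ≠ v := fun h => hb (Subtype.ext h)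
      simp [hF, this]
    · simp
  have hTL : A + F * C = Matrix.of fun x x' : {w // p w} => M x x' - M x v * M v x' := by
    rw [hFC]
    ext x x'
    simp [hA]
    ring
  have hTR : B + F * D = 0 := by
    rw [hFD]
    ext x y
    have := hmul x x.2 y y.2
    simp [hB, this]
  have hmulE : Matrix.fromBlocks 1 F 0 1 * Matrix.fromBlocks A B C D
      = Matrix.fromBlocks (Matrix.of fun x x' : {w // p w} => M x x' - M x v * M v x') 0 C D := by
    rw [Matrix.fromBlocks_multiply, Matrix.zero_mul, Matrix.zero_mul, Matrix.one_mul,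
      Matrix.one_mul, zero_add, zero_add, hTL, hTR, Matrix.one_mul, Matrix.one_mul]
  have hdets := congrArg Matrix.det hmulE
  rw [Matrix.det_mul, hE, one_mul] at hdets
  rw [hdet, hsub, hdets, Matrix.det_fromBlocks_zero₁₂]

end MatrixLemmas

/-! ### Graph lemmas -/

section Graph

variable {V : Type*} [Fintype V] [DecidableEq V] {G : SimpleGraph V}
  {r : ℕ} {X Y : Fin r → Finset V} (hG : IsBiBlockGraph G r X Y)

include hG

/-- two distinct vertices lie in at most one common block -/
lemma block_unique {u v : V} {i j : Fin r} (huv : u ≠ v)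
    (hui : u ∈ X i ∪ Y i) (hvi : v ∈ X i ∪ Y i)
    (huj : u ∈ X j ∪ Y j) (hvj : v ∈ X j ∪ Y j) : i = j := by
  by_contra hij
  have h2 : ({u, v} : Finset V) ⊆ (X i ∪ Y i) ∩ (X j ∪ Y j) := by
    intro w hw
    rcases Finset.mem_insert.mp hw with h | h
    · subst h; exact Finset.mem_inter.mpr ⟨hui, huj⟩
    · rw [Finset.mem_singleton] at h; subst h; exact Finset.mem_inter.mpr ⟨hvi, hvj⟩
  have := (Finset.card_le_card h2).trans (hG.inter_le_one i j hij)
  rw [Finset.card_insert_of_notMem (by simpa using huv), Finset.card_singleton] at this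
  omega

lemma adj_cross {u v : V} {i : Fin r} (hu : u ∈ X i) (hv : v ∈ Y i) : G.Adj u v :=
  (hG.adj_iff u v).mpr ⟨i, Or.inl ⟨hu, hv⟩⟩

lemma not_adj_same {u v : V} {i : Fin r}
    (h : (u ∈ X i ∧ v ∈ X i) ∨ (u ∈ Y i ∧ v ∈ Y i)) : ¬ G.Adj u v := by
  intro hadj
  have hne : u ≠ v := hadj.ne
  obtain ⟨j, hj⟩ := (hG.adj_iff u v).mp hadj
  have hui : u ∈ X i ∪ Y i := by rcases h with ⟨h1, _⟩ | ⟨h1, _⟩ <;> simp [h1]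
  have hvi : v ∈ X i ∪ Y i := by rcases h with ⟨_, h2⟩ | ⟨_, h2⟩ <;> simp [h2]
  have huj : u ∈ X j ∪ Y j := by rcases hj with ⟨h1, _⟩ | ⟨h1, _⟩ <;> simp [h1]
  have hvj : v ∈ X j ∪ Y j := by rcases hj with ⟨_, h2⟩ | ⟨_, h2⟩ <;> simp [h2]
  have hij : i = j := block_unique hG hne hui hvi huj hvj
  subst hij
  have hd := hG.disjointXY i
  rcases h with ⟨h1, h2⟩ | ⟨h1, h2⟩ <;> rcases hj with ⟨g1, g2⟩ | ⟨g1, g2⟩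
  · exact (Finset.disjoint_left.mp hd) h2 g2
  · exact (Finset.disjoint_left.mp hd) h1 g1
  · exact (Finset.disjoint_left.mp hd) g1 h1
  · exact (Finset.disjoint_left.mp hd) g2 h2

lemma dist_cross {u v : V} {i : Fin r} (hu : u ∈ X i) (hv : v ∈ Y i) : G.dist u v = 1 :=
  SimpleGraph.dist_eq_one_iff_adj.mpr (adj_cross hG hu hv)

lemma dist_same {u v : V} {i : Fin r} (hne : u ≠ v)
    (h : (u ∈ X i ∧ v ∈ X i) ∨ (u ∈ Y i ∧ v ∈ Y i)) : G.dist u v = 2 := by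
  obtain ⟨w, hw, haw, hwb⟩ : ∃ w, w ∉ ({u, v} : Finset V) ∧ G.Adj u w ∧ G.Adj w v := by
    rcases h with ⟨h1, h2⟩ | ⟨h1, h2⟩
    · obtain ⟨w, hw⟩ := hG.nonemptyY i
      refine ⟨w, ?_, adj_cross hG h1 hw, (adj_cross hG h2 hw).symm⟩
      simp only [Finset.mem_insert, Finset.mem_singleton]
      rintro (rfl | rfl)
      · exact (Finset.disjoint_left.mp (hG.disjointXY i)) h1 hw
      · exact (Finset.disjoint_left.mp (hG.disjointXY i)) h2 hw
    · obtain ⟨w, hw⟩ := hG.nonemptyX i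
      refine ⟨w, ?_, (adj_cross hG hw h1).symm, adj_cross hG hw h2⟩
      simp only [Finset.mem_insert, Finset.mem_singleton]
      rintro (rfl | rfl)
      · exact (Finset.disjoint_left.mp (hG.disjointXY i)) hw h1
      · exact (Finset.disjoint_left.mp (hG.disjointXY i)) hw h2
  have hle : G.dist u v ≤ 2 := by
    have := SimpleGraph.dist_le
      (SimpleGraph.Walk.cons haw (SimpleGraph.Walk.cons hwb SimpleGraph.Walk.nil))
    simpa using this
  have h0 : G.dist u v ≠ 0 := by
    have := hG.connected.pos_dist_of_ne hne
    omega
  have h1 : G.dist u v ≠ 1 := fun h1 =>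
    (not_adj_same hG h) (SimpleGraph.dist_eq_one_iff_adj.mp h1)
  omega

end Graph

section Leaf

variable {V : Type*} [Fintype V] [DecidableEq V] {G : SimpleGraph V}
  {r : ℕ} {X Y : Fin r → Finset V} (hG : IsBiBlockGraph G r X Y)
  {i0 : Fin r} {v : V}
  (hleaf : ∀ w ∈ (X i0 ∪ Y i0).erase v, ∀ j, w ∈ X j ∪ Y j → j = i0)

include hG hleaf

/-- a neighbour of a pendant vertex stays in the leaf block -/
lemma adj_pendant {x b : V} (hx : x ∈ (X i0 ∪ Y i0).erase v) (hadj : G.Adj x b) :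
    b ∈ X i0 ∪ Y i0 := by
  obtain ⟨j, hj⟩ := (hG.adj_iff x b).mp hadj
  have hxj : x ∈ X j ∪ Y j := by rcases hj with ⟨h1, _⟩ | ⟨h1, _⟩ <;> simp [h1]
  have hbj : b ∈ X j ∪ Y j := by rcases hj with ⟨_, h2⟩ | ⟨_, h2⟩ <;> simp [h2]
  have := hleaf x hx j hxj
  subst this
  exact hbj

lemma walk_mem_support {x y : V} (p : G.Walk x y)
    (hx : x ∈ (X i0 ∪ Y i0).erase v) (hy : y ∉ (X i0 ∪ Y i0).erase v) :
    v ∈ p.support := by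
  induction p with
  | nil => exact absurd hx hy
  | @cons a c b hadj q ih =>
    have hb : c ∈ X i0 ∪ Y i0 := adj_pendant hG hleaf hx hadj
    by_cases hbv : c = v
    · subst hbv
      rw [SimpleGraph.Walk.support_cons]
      exact List.mem_cons_of_mem _ (SimpleGraph.Walk.start_mem_support q)
    · have hbS : c ∈ (X i0 ∪ Y i0).erase v := Finset.mem_erase.mpr ⟨hbv, hb⟩
      rw [SimpleGraph.Walk.support_cons]
      exact List.mem_cons_of_mem _ (ih hbS hy)

lemma walk_mem_support' {x y : V} (p : G.Walk x y)
    (hx : x ∉ (X i0 ∪ Y i0).erase v) (hy : y ∈ (X i0 ∪ Y i0).erase v) :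
    v ∈ p.support := by
  have := walk_mem_support hG hleaf p.reverse hy hx
  rwa [SimpleGraph.Walk.support_reverse, List.mem_reverse] at this

lemma dist_add_of_pendant {x y : V} (hx : x ∈ (X i0 ∪ Y i0).erase v)
    (hy : y ∉ (X i0 ∪ Y i0).erase v) :
    G.dist x y = G.dist x v + G.dist v y := by
  have hle : G.dist x y ≤ G.dist x v + G.dist v y := hG.connected.dist_triangle
  obtain ⟨p, hp⟩ := hG.connected.exists_walk_length_eq_dist x y
  have hv : v ∈ p.support := walk_mem_support hG hleaf p hx hy
  have h1 : G.dist x v ≤ (p.takeUntil v hv).length := SimpleGraph.dist_le _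
  have h2 : G.dist v y ≤ (p.dropUntil v hv).length := SimpleGraph.dist_le _
  have hlen : (p.takeUntil v hv).length + (p.dropUntil v hv).length = p.length := by
    rw [← SimpleGraph.Walk.length_append, SimpleGraph.Walk.take_spec]
  omega

lemma path_avoids {x y : V} (p : G.Walk x y) (hpath : p.IsPath)
    (hx : x ∉ (X i0 ∪ Y i0).erase v) (hy : y ∉ (X i0 ∪ Y i0).erase v) :
    ∀ z ∈ p.support, z ∉ (X i0 ∪ Y i0).erase v := by
  intro z hz hzS
  have hv1 : v ∈ (p.takeUntil z hz).support := walk_mem_support' hG hleaf _ hx hzS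
  have hv2 : v ∈ (p.dropUntil z hz).support := walk_mem_support hG hleaf _ hzS hy
  have hvz : v ≠ z := fun h => (Finset.mem_erase.mp hzS).1 h.symm
  have hnd := hpath.support_nodup
  rw [← SimpleGraph.Walk.take_spec p hz, SimpleGraph.Walk.support_append] at hnd
  have hdisj := List.disjoint_of_nodup_append hnd
  have hv2' : v ∈ (p.dropUntil z hz).support.tail := by
    have := SimpleGraph.Walk.support_eq_cons (p.dropUntil z hz)
    rw [this] at hv2
    rcases List.mem_cons.mp hv2 with h | h
    · exact absurd h hvz
    · exact h
  exact hdisj hv1 hv2'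

end Leaf

section Comap

variable {V : Type*} [Fintype V] [DecidableEq V] {G : SimpleGraph V} (S : Finset V)

/-- lift a walk avoiding `S` to the comap graph on `{w // ¬ w ∈ S}` -/
lemma lift_walk : ∀ (a b : V) (p : G.Walk a b) (ha : ¬ a ∈ S) (hb : ¬ b ∈ S),
    (∀ z ∈ p.support, ¬ z ∈ S) →
    ∃ q : (G.comap (Subtype.val : {w : V // ¬ w ∈ S} → V)).Walk ⟨a, ha⟩ ⟨b, hb⟩,
      q.length = p.length := by
  intro a b p
  induction p with
  | nil => intro ha hb _; exact ⟨SimpleGraph.Walk.nil, rfl⟩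
  | @cons a c b hadj q ih =>
    intro ha hb hall
    have hc : ¬ c ∈ S := by
      apply hall
      rw [SimpleGraph.Walk.support_cons]
      exact List.mem_cons_of_mem _ (SimpleGraph.Walk.start_mem_support q)
    obtain ⟨q', hq'⟩ := ih hc hb (fun z hz => hall z (by
      rw [SimpleGraph.Walk.support_cons]; exact List.mem_cons_of_mem _ hz))
    refine ⟨SimpleGraph.Walk.cons (by exact hadj) q', ?_⟩
    exact congrArg (· + 1) hq'

/-- project a walk in the comap graph down to `G` -/
lemma project_walk (a b : {w : V // ¬ w ∈ S})
    (q : (G.comap (Subtype.val : {w : V // ¬ w ∈ S} → V)).Walk a b) :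
    ∃ p : G.Walk a b, p.length = q.length := by
  let f : (G.comap (Subtype.val : {w : V // ¬ w ∈ S} → V)) →g G :=
    ⟨Subtype.val, fun h => h⟩
  exact ⟨q.map f, q.length_map f⟩

end Comap

section LeafExists

variable {V : Type*} [Fintype V] [DecidableEq V] {G : SimpleGraph V}
  {r : ℕ} {X Y : Fin r → Finset V} (hG : IsBiBlockGraph G r X Y)

include hG

lemma no_enter_block {i0 : Fin r}
    (hiso : ∀ w ∈ X i0 ∪ Y i0, ∀ j, w ∈ X j ∪ Y j → j = i0) :
    ∀ (a b : V) (p : G.Walk a b), a ∉ X i0 ∪ Y i0 → b ∈ X i0 ∪ Y i0 → False := by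
  intro a b p
  induction p with
  | nil => intro ha hb; exact ha hb
  | @cons a c b hadj q ih =>
    intro ha hb
    by_cases hc : c ∈ X i0 ∪ Y i0
    · obtain ⟨j, hj⟩ := (hG.adj_iff a c).mp hadj
      have haj : a ∈ X j ∪ Y j := by rcases hj with ⟨h1, _⟩ | ⟨h1, _⟩ <;> simp [h1]
      have hcj : c ∈ X j ∪ Y j := by rcases hj with ⟨_, h2⟩ | ⟨_, h2⟩ <;> simp [h2]
      have := hiso c hc j hcj
      subst this
      exact ha haj
    · exact ih hc hb

lemma exists_leaf (hr : 2 ≤ r) :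
    ∃ (i0 : Fin r) (v : V), v ∈ X i0 ∪ Y i0 ∧ (∃ j, j ≠ i0 ∧ v ∈ X j ∪ Y j) ∧
      (∀ w ∈ (X i0 ∪ Y i0).erase v, ∀ j, w ∈ X j ∪ Y j → j = i0) := by
  classical
  set Bk : Fin r → Finset V := fun i => X i ∪ Y i with hBk
  set deg : V → ℕ := fun w => (Finset.univ.filter (fun i : Fin r => w ∈ Bk i)).card with hdeg
  have h1 : ∀ w, 1 ≤ deg w := by
    intro w
    obtain ⟨i, hi⟩ := hG.covers w
    have : i ∈ Finset.univ.filter (fun i : Fin r => w ∈ Bk i) := by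
      simp only [Finset.mem_filter, Finset.mem_univ, true_and, hBk]
      exact hi
    exact Finset.card_pos.mpr ⟨i, this⟩
  have hBkcard : ∀ i, (Bk i).card = (X i).card + (Y i).card := fun i =>
    Finset.card_union_of_disjoint (hG.disjointXY i)
  have hsum : ∑ w : V, deg w = ∑ i, (Bk i).card := by
    simp only [hdeg, Finset.card_filter]
    rw [Finset.sum_comm]
    congr 1
    ext i
    rw [← Finset.card_filter]
    congr 1
    ext w
    simp
  have htot : ∑ w : V, deg w + 1 = Fintype.card V + r := by
    rw [hsum]
    have := hG.card_eq
    have : ∑ i, (Bk i).card = ∑ i, ((X i).card + (Y i).card) := by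
      exact Finset.sum_congr rfl (fun i _ => hBkcard i)
    omega
  set C : Finset V := Finset.univ.filter (fun w => 2 ≤ deg w) with hC
  have hsplit : ∑ w ∈ C, deg w + ∑ w ∈ Finset.univ.filter (fun w => ¬ 2 ≤ deg w), deg w
      = ∑ w : V, deg w := by
    rw [hC]
    exact Finset.sum_filter_add_sum_filter_not _ _ _
  have hCbig : 2 * C.card ≤ ∑ w ∈ C, deg w := by
    calc 2 * C.card = ∑ _w ∈ C, 2 := by rw [Finset.sum_const, smul_eq_mul, mul_comm]
    _ ≤ ∑ w ∈ C, deg w := Finset.sum_le_sum (fun w hw => (Finset.mem_filter.mp hw).2)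
  have hrest : Fintype.card V - C.card ≤ ∑ w ∈ Finset.univ.filter (fun w => ¬ 2 ≤ deg w), deg w := by
    have hcard : (Finset.univ.filter (fun w => ¬ 2 ≤ deg w)).card = Fintype.card V - C.card := by
      have := Finset.card_filter_add_card_filter_not (s := (Finset.univ : Finset V))
        (p := fun w => 2 ≤ deg w)
      simp only [Finset.card_univ] at this
      rw [hC]
      omega
    calc Fintype.card V - C.card = ∑ _w ∈ Finset.univ.filter (fun w => ¬ 2 ≤ deg w), 1 := by
          rw [Finset.sum_const, smul_eq_mul, mul_one, hcard]
    _ ≤ _ := Finset.sum_le_sum (fun w _ => h1 w)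
  have hfc : C.card + (Finset.univ.filter (fun w => ¬ 2 ≤ deg w)).card = Fintype.card V := by
    have := Finset.card_filter_add_card_filter_not (s := (Finset.univ : Finset V))
      (p := fun w => 2 ≤ deg w)
    simp only [Finset.card_univ] at this
    rw [hC]
    omega
  have hCle : C.card + 1 ≤ r := by
    have hN : C.card ≤ Fintype.card V := by omega
    omega
  by_cases hex : ∃ i, ((Bk i) ∩ C).card ≤ 1
  · obtain ⟨i0, hi0⟩ := hex
    rcases Finset.eq_empty_or_nonempty ((Bk i0) ∩ C) with hemp | ⟨v, hv⟩
    · exfalso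
      have hiso : ∀ w ∈ Bk i0, ∀ j, w ∈ Bk j → j = i0 := by
        intro w hw j hj
        have hdw : deg w ≤ 1 := by
          by_contra hd
          have : w ∈ (Bk i0) ∩ C := Finset.mem_inter.mpr ⟨hw, by simp [hC]; omega⟩
          rw [hemp] at this
          exact absurd this (Finset.notMem_empty w)
        have hji : j ∈ Finset.univ.filter (fun i : Fin r => w ∈ Bk i) := by simp [hj]
        have hii : i0 ∈ Finset.univ.filter (fun i : Fin r => w ∈ Bk i) := by simp [hw]
        exact Finset.card_le_one.mp hdw j hji i0 hii
      obtain ⟨j, hj⟩ := Fintype.exists_ne_of_one_lt_card (by simp; omega) i0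
      have hBj2 : 2 ≤ (Bk j).card := by
        obtain ⟨x, hx⟩ := hG.nonemptyX j
        obtain ⟨y, hy⟩ := hG.nonemptyY j
        have hxy : x ≠ y := fun h => (Finset.disjoint_left.mp (hG.disjointXY j)) hx (h ▸ hy)
        have : ({x, y} : Finset V) ⊆ Bk j := by
          intro w hw
          rcases Finset.mem_insert.mp hw with h | h
          · subst h; simp [hBk, hx]
          · rw [Finset.mem_singleton] at h; subst h; simp [hBk, hy]
        calc 2 = ({x, y} : Finset V).card := by
              rw [Finset.card_insert_of_notMem (by simpa using hxy), Finset.card_singleton]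
        _ ≤ _ := Finset.card_le_card this
      obtain ⟨z, hz, hznotin⟩ : ∃ z ∈ Bk j, z ∉ Bk i0 := by
        by_contra hsub
        push_neg at hsub
        have : Bk j ⊆ (Bk j) ∩ (Bk i0) := fun w hw => Finset.mem_inter.mpr ⟨hw, hsub w hw⟩
        have := (Finset.card_le_card this).trans (hG.inter_le_one j i0 hj)
        omega
      obtain ⟨u, hu⟩ := hG.nonemptyX i0
      have huB : u ∈ Bk i0 := by simp [hBk, hu]
      obtain ⟨p⟩ := hG.connected z u
      exact no_enter_block hG hiso z u p hznotin huB
    · have hvB : v ∈ Bk i0 := (Finset.mem_inter.mp hv).1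
      have hvC : v ∈ C := (Finset.mem_inter.mp hv).2
      refine ⟨i0, v, hvB, ?_, ?_⟩
      · have hdv : 2 ≤ deg v := by
          have := Finset.mem_filter.mp hvC
          exact this.2
        have : 1 < (Finset.univ.filter (fun i : Fin r => v ∈ Bk i)).card := hdv
        obtain ⟨j, hjmem, hjne⟩ := Finset.exists_mem_ne this i0
        exact ⟨j, hjne, (Finset.mem_filter.mp hjmem).2⟩
      · intro w hw j hwj
        by_contra hne
        have hwB : w ∈ Bk i0 := (Finset.mem_erase.mp hw).2
        have hwv : w ≠ v := (Finset.mem_erase.mp hw).1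
        have hdw : 2 ≤ deg w := by
          have hji : j ∈ Finset.univ.filter (fun i : Fin r => w ∈ Bk i) :=
            Finset.mem_filter.mpr ⟨Finset.mem_univ _, hwj⟩
          have hii : i0 ∈ Finset.univ.filter (fun i : Fin r => w ∈ Bk i) := by simp [hwB]
          have h2 : ({j, i0} : Finset (Fin r)) ⊆ Finset.univ.filter (fun i : Fin r => w ∈ Bk i) := by
            intro k hk
            rcases Finset.mem_insert.mp hk with h | h
            · subst h; exact hji
            · rw [Finset.mem_singleton] at h; subst h; exact hii
          calc 2 = ({j, i0} : Finset (Fin r)).card := by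
                rw [Finset.card_insert_of_notMem (by simpa using hne), Finset.card_singleton]
          _ ≤ _ := Finset.card_le_card h2
        have hwC : w ∈ C := by simp [hC]; omega
        have h2 : ({w, v} : Finset V) ⊆ (Bk i0) ∩ C := by
          intro z hz
          rcases Finset.mem_insert.mp hz with h | h
          · subst h; exact Finset.mem_inter.mpr ⟨hwB, hwC⟩
          · rw [Finset.mem_singleton] at h; subst h; exact hv
        have := (Finset.card_le_card h2).trans hi0
        rw [Finset.card_insert_of_notMem (by simpa using hwv), Finset.card_singleton] at this
        omega
  · exfalso
    push_neg at hex
    have h2r : 2 * r ≤ ∑ i, ((Bk i) ∩ C).card := by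
      calc 2 * r = ∑ _i : Fin r, 2 := by simp [mul_comm]
      _ ≤ _ := Finset.sum_le_sum (fun i _ => hex i)
    have hdouble : ∑ i, ((Bk i) ∩ C).card = ∑ w ∈ C, deg w := by
      have hstep : ∀ i, ((Bk i) ∩ C).card = ∑ w ∈ C, (if w ∈ Bk i then 1 else 0) := by
        intro i
        rw [← Finset.card_filter]
        congr 1
        ext w
        simp only [Finset.mem_filter, Finset.mem_inter]
        tauto
      rw [Finset.sum_congr rfl (fun i _ => hstep i), Finset.sum_comm]
      refine Finset.sum_congr rfl (fun w _ => ?_)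
      rw [← Finset.card_filter]
    omega

end LeafExists

/-! ### determinant of the reduced leaf block -/

lemma ablock_det {V : Type*} [Fintype V] [DecidableEq V] {G : SimpleGraph V}
    (P Q : Finset V) (hdisj : Disjoint P Q) (v : V) (hv : v ∈ P) (hQne : Q.Nonempty)
    (S : Finset V) (hSeq : ∀ w, w ∈ S ↔ (w ≠ v ∧ (w ∈ P ∨ w ∈ Q))) (q : ℝ)
    (hdsame : ∀ u u', u ≠ u' → (u ∈ P ∧ u' ∈ P) ∨ (u ∈ Q ∧ u' ∈ Q) → G.dist u u' = 2)
    (hdcross : ∀ u u', (u ∈ P ∧ u' ∈ Q) ∨ (u ∈ Q ∧ u' ∈ P) → G.dist u u' = 1) :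
    (Matrix.of fun x x' : {w : V // w ∈ S} =>
        expDistMatrix G q x x' - expDistMatrix G q x v * expDistMatrix G q v x').det
      = (1 - q^2) ^ S.card * (1 - q^2 * ((P.card:ℝ) - 1) * ((Q.card:ℝ) - 1)) := by
  classical
  set A : Finset {w : V // w ∈ S} := P.subtype (· ∈ S) with hA
  set B : Finset {w : V // w ∈ S} := Q.subtype (· ∈ S) with hB
  have hmemA : ∀ x : {w : V // w ∈ S}, x ∈ A ↔ (x : V) ∈ P := fun x => Finset.mem_subtype
  have hmemB : ∀ x : {w : V // w ∈ S}, x ∈ B ↔ (x : V) ∈ Q := fun x => Finset.mem_subtype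
  have hABdisj : Disjoint A B := by
    rw [Finset.disjoint_left]
    intro a ha hb
    exact (Finset.disjoint_left.mp hdisj) ((hmemA a).mp ha) ((hmemB a).mp hb)
  have hABcover : ∀ x : {w : V // w ∈ S}, x ∈ A ∨ x ∈ B := by
    intro x
    rcases ((hSeq x).mp x.2).2 with h | h
    · exact Or.inl ((hmemA x).mpr h)
    · exact Or.inr ((hmemB x).mpr h)
  have hSP : ∀ x : {w : V // w ∈ S}, (x : V) ≠ v := fun x => ((hSeq x).mp x.2).1
  -- distance to the cut vertex
  have hxv : ∀ x : {w : V // w ∈ S}, G.dist (x : V) v = if x ∈ A then 2 else 1 := by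
    intro x
    by_cases hxA : x ∈ A
    · rw [if_pos hxA]
      exact hdsame _ _ (hSP x) (Or.inl ⟨(hmemA x).mp hxA, hv⟩)
    · rw [if_neg hxA]
      rcases hABcover x with h | h
      · exact absurd h hxA
      · exact hdcross _ _ (Or.inr ⟨(hmemB x).mp h, hv⟩)
  have hvx : ∀ x : {w : V // w ∈ S}, G.dist v (x : V) = if x ∈ A then 2 else 1 := by
    intro x
    rw [SimpleGraph.dist_comm]
    exact hxv x
  have hMeq : (Matrix.of fun x x' : {w : V // w ∈ S} =>
        expDistMatrix G q x x' - expDistMatrix G q x v * expDistMatrix G q v x')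
      = (Matrix.of fun u v : {w : V // w ∈ S} =>
      (if u = v then (1:ℝ) else if ((u ∈ A) ↔ (v ∈ A)) then q^2 else q)
        - (if u ∈ A then q^2 else q) * (if v ∈ A then q^2 else q)) := by
    ext x x'
    have e1 : ∀ y : {w : V // w ∈ S}, expDistMatrix G q y v = if y ∈ A then q^2 else q := by
      intro y
      show q ^ G.dist (y : V) v = _
      rw [hxv y]
      split_ifs <;> norm_num
    have e2 : ∀ y : {w : V // w ∈ S}, expDistMatrix G q v y = if y ∈ A then q^2 else q := by
      intro y
      show q ^ G.dist v (y : V) = _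
      rw [hvx y]
      split_ifs <;> norm_num
    rw [Matrix.of_apply, Matrix.of_apply, e1 x, e2 x']
    congr 1
    show q ^ G.dist (x : V) (x' : V) = _
    by_cases hxx : x = x'
    · subst hxx
      rw [if_pos rfl, SimpleGraph.dist_self, pow_zero]
    · rw [if_neg hxx]
      have hne' : (x : V) ≠ (x' : V) := fun h => hxx (Subtype.ext h)
      rcases hABcover x with hx | hx <;> rcases hABcover x' with hx' | hx'
      · rw [hdsame _ _ hne' (Or.inl ⟨(hmemA x).mp hx, (hmemA x').mp hx'⟩),
          if_pos (iff_of_true hx hx')]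
      · exact (by rw [hdcross _ _ (Or.inl ⟨(hmemA x).mp hx, (hmemB x').mp hx'⟩), pow_one,
          if_neg (fun h => (Finset.disjoint_right.mp hABdisj hx') (h.mp hx))])
      · exact (by rw [hdcross _ _ (Or.inr ⟨(hmemB x).mp hx, (hmemA x').mp hx'⟩), pow_one,
          if_neg (fun h => (Finset.disjoint_right.mp hABdisj hx) (h.mpr hx'))])
      · rw [hdsame _ _ hne' (Or.inr ⟨(hmemB x).mp hx, (hmemB x').mp hx'⟩),
          if_pos (iff_of_false (Finset.disjoint_right.mp hABdisj hx)
            (Finset.disjoint_right.mp hABdisj hx'))]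
  rw [hMeq, key_det A B hABdisj hABcover q]
  have hcardW : Fintype.card {w : V // w ∈ S} = S.card :=
    Fintype.card_of_subtype S (fun _ => Iff.rfl)
  have hP1 : 1 ≤ P.card := Finset.card_pos.mpr ⟨v, hv⟩
  have hAcard : A.card = P.card - 1 := by
    rw [hA, Finset.card_subtype]
    have : P.filter (· ∈ S) = P.erase v := by
      ext w
      simp only [Finset.mem_filter, Finset.mem_erase, hSeq]
      constructor
      · rintro ⟨hwP, hwv, _⟩; exact ⟨hwv, hwP⟩
      · rintro ⟨hwv, hwP⟩; exact ⟨hwP, hwv, Or.inl hwP⟩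
    rw [this, Finset.card_erase_of_mem hv]
  have hBcard : B.card = Q.card := by
    rw [hB, Finset.card_subtype]
    congr 1
    apply Finset.filter_true_of_mem
    intro w hw
    rw [hSeq]
    exact ⟨fun h => (Finset.disjoint_left.mp hdisj) hv (h ▸ hw), Or.inr hw⟩
  rw [hcardW, hAcard, hBcard]
  have : ((P.card - 1 : ℕ) : ℝ) = (P.card : ℝ) - 1 := by
    push_cast [hP1]
    ring
  rw [this]

/-! ### The master lemma -/

universe u

lemma master_det : ∀ (r : ℕ) {V : Type u} [Fintype V] [DecidableEq V] (G : SimpleGraph V)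
    (X Y : Fin r → Finset V), IsBiBlockGraph G r X Y → ∀ (q : ℝ),
    (expDistMatrix G q).det = (1 - q^2) ^ (Fintype.card V - 1)
      * ∏ i, (1 - q^2 * (((X i).card : ℝ) - 1) * (((Y i).card : ℝ) - 1)) := by
  intro r
  induction r with
  | zero =>
    intro V _ _ G X Y hG q
    exfalso
    have hcard : Fintype.card V = 1 := by
      have := hG.card_eq
      simpa using this
    have : Nonempty V := Fintype.card_pos_iff.mp (by omega)
    obtain ⟨w⟩ := this
    obtain ⟨i, _⟩ := hG.covers w
    exact i.elim0
  | succ r' ih =>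
    intro V _ _ G X Y hG q
    classical
    obtain ⟨i0, v, hvB, hcut, hleaf⟩ :
        ∃ (i0 : Fin (r'+1)) (v : V), v ∈ X i0 ∪ Y i0 ∧
          (r' ≠ 0 → ∃ j, j ≠ i0 ∧ v ∈ X j ∪ Y j) ∧
          (∀ w ∈ (X i0 ∪ Y i0).erase v, ∀ j, w ∈ X j ∪ Y j → j = i0) := by
      rcases Nat.eq_zero_or_pos r' with h0 | h0
      · subst h0
        obtain ⟨w, hw⟩ := hG.nonemptyX 0
        exact ⟨0, w, Finset.mem_union_left _ hw, fun h => absurd rfl h,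
          fun w _ j _ => Fin.ext (by omega)⟩
      · obtain ⟨i0, v, h1, h2, h3⟩ := exists_leaf hG (by omega)
        exact ⟨i0, v, h1, fun _ => h2, h3⟩
    set S : Finset V := (X i0 ∪ Y i0).erase v with hSdef
    have hvS : v ∉ S := Finset.notMem_erase v _
    have hXv : ∀ w, w ∈ X i0 ∪ Y i0 → w ≠ v → w ∈ S :=
      fun w hw hne => Finset.mem_erase.mpr ⟨hne, hw⟩
    have hveq : ∀ w, w ∈ X i0 ∪ Y i0 → w ∉ S → w = v := by
      intro w hw hns
      by_contra h
      exact hns (hXv w hw h)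
    have hnotS : ∀ j, j ≠ i0 → ∀ w, w ∈ X j ∪ Y j → ¬ w ∈ S := by
      intro j hj w hwj hwS
      exact hj (hleaf w hwS j hwj)
    have hSeq1 : ∀ w, w ∈ S ↔ (w ≠ v ∧ (w ∈ X i0 ∨ w ∈ Y i0)) := by
      intro w
      rw [hSdef]
      constructor
      · intro h
        exact ⟨(Finset.mem_erase.mp h).1, Finset.mem_union.mp (Finset.mem_erase.mp h).2⟩
      · rintro ⟨h1, h2⟩
        exact Finset.mem_erase.mpr ⟨h1, Finset.mem_union.mpr h2⟩
    have hSeq2 : ∀ w, w ∈ S ↔ (w ≠ v ∧ (w ∈ Y i0 ∨ w ∈ X i0)) := by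
      intro w
      rw [hSeq1 w, or_comm]
    -- split the determinant at the cut vertex
    have hmul : ∀ x ∈ S, ∀ y, y ∉ S →
        expDistMatrix G q x y = expDistMatrix G q x v * expDistMatrix G q v y := by
      intro x hx y hy
      show q ^ G.dist x y = q ^ G.dist x v * q ^ G.dist v y
      rw [← pow_add, dist_add_of_pendant hG hleaf hx hy]
    have hsplit := split_det (expDistMatrix G q) S v hvS hmul
    -- the determinant of the reduced leaf block
    have hm1 : 1 ≤ (X i0).card := Finset.card_pos.mpr (hG.nonemptyX i0)
    have hn1 : 1 ≤ (Y i0).card := Finset.card_pos.mpr (hG.nonemptyY i0)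
    have hAdet : (Matrix.of fun x x' : {w : V // w ∈ S} =>
        expDistMatrix G q x x' - expDistMatrix G q x v * expDistMatrix G q v x').det
        = (1 - q^2) ^ S.card
          * (1 - q^2 * (((X i0).card : ℝ) - 1) * (((Y i0).card : ℝ) - 1)) := by
      rcases Finset.mem_union.mp hvB with hvX | hvY
      · exact ablock_det (X i0) (Y i0) (hG.disjointXY i0) v hvX (hG.nonemptyY i0) S
          hSeq1 q
          (fun u u' hne h => dist_same hG hne h)
          (fun u u' h => by
            rcases h with ⟨h1, h2⟩ | ⟨h1, h2⟩
            · exact dist_cross hG h1 h2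
            · rw [SimpleGraph.dist_comm]; exact dist_cross hG h2 h1)
      · rw [ablock_det (Y i0) (X i0) (hG.disjointXY i0).symm v hvY (hG.nonemptyX i0) S
          hSeq2 q
          (fun u u' hne h => dist_same hG hne h.symm)
          (fun u u' h => by
            rcases h with ⟨h1, h2⟩ | ⟨h1, h2⟩
            · rw [SimpleGraph.dist_comm]; exact dist_cross hG h2 h1
            · exact dist_cross hG h1 h2)]
        ring
    -- the comap graph on the complement of S
    set G' : SimpleGraph {w : V // ¬ w ∈ S} := G.comap Subtype.val with hG'def
    have hpath : ∀ (a b : V), a ∉ S → b ∉ S →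
        ∃ p : G.Walk a b, p.length = G.dist a b ∧ ∀ z ∈ p.support, z ∉ S := by
      intro a b ha hb
      obtain ⟨p0, hp0⟩ := hG.connected.exists_walk_length_eq_dist a b
      have hbp : p0.bypass.length = G.dist a b :=
        le_antisymm (hp0 ▸ SimpleGraph.Walk.length_bypass_le p0) (SimpleGraph.dist_le _)
      exact ⟨p0.bypass, hbp,
        path_avoids hG hleaf p0.bypass (SimpleGraph.Walk.bypass_isPath p0) ha hb⟩
    have hG'conn : G'.Connected := by
      rw [SimpleGraph.connected_iff]
      refine ⟨?_, ⟨⟨v, hvS⟩⟩⟩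
      intro a b
      obtain ⟨p, _, hav⟩ := hpath ↑a ↑b a.2 b.2
      obtain ⟨q', _⟩ := lift_walk S ↑a ↑b p a.2 b.2 hav
      exact ⟨q'⟩
    have hdist' : ∀ a b : {w : V // ¬ w ∈ S}, G'.dist a b = G.dist ↑a ↑b := by
      intro a b
      apply le_antisymm
      · obtain ⟨p, hlen, hav⟩ := hpath ↑a ↑b a.2 b.2
        obtain ⟨q', hq'⟩ := lift_walk S ↑a ↑b p a.2 b.2 hav
        calc G'.dist a b ≤ q'.length := SimpleGraph.dist_le q'
        _ = G.dist ↑a ↑b := by rw [hq', hlen]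
      · obtain ⟨q', hq'⟩ := hG'conn.exists_walk_length_eq_dist a b
        obtain ⟨p, hp⟩ := project_walk S a b q'
        calc G.dist ↑a ↑b ≤ p.length := SimpleGraph.dist_le p
        _ = G'.dist a b := by rw [hp, hq']
    have hDmat : (Matrix.of fun y y' : {w : V // ¬ w ∈ S} =>
        expDistMatrix G q y y') = expDistMatrix G' q := by
      ext a b
      show q ^ G.dist (a : V) (b : V) = q ^ G'.dist a b
      rw [hdist' a b]
    -- cardinalities
    have hT1 : 1 ≤ Fintype.card {w : V // ¬ w ∈ S} :=
      Fintype.card_pos_iff.mpr ⟨⟨v, hvS⟩⟩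
    have hTS : Fintype.card {w : V // ¬ w ∈ S} + S.card = Fintype.card V := by
      have h1 : Fintype.card {w : V // ¬ w ∈ S} = (Finset.univ \ S).card :=
        Fintype.card_of_subtype (Finset.univ \ S) (fun x => by simp)
      have h2 : (Finset.univ \ S).card = Fintype.card V - S.card := by
        rw [Finset.card_sdiff_of_subset (Finset.subset_univ S), Finset.card_univ]
      have h3 : S.card ≤ Fintype.card V := by
        rw [← Finset.card_univ]
        exact Finset.card_le_card (Finset.subset_univ S)
      omega
    have hScard : S.card + 1 = (X i0).card + (Y i0).card := by
      have h1 : (X i0 ∪ Y i0).card = (X i0).card + (Y i0).card :=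
        Finset.card_union_of_disjoint (hG.disjointXY i0)
      have h2 := Finset.card_erase_of_mem hvB
      have h3 : 1 ≤ (X i0 ∪ Y i0).card := Finset.card_pos.mpr ⟨v, hvB⟩
      rw [hSdef]
      omega
    -- determinant of the rest
    have hDdet : (Matrix.of fun y y' : {w : V // ¬ w ∈ S} => expDistMatrix G q y y').det
        = (1 - q^2) ^ (Fintype.card {w : V // ¬ w ∈ S} - 1)
          * ∏ j : Fin r', (1 - q^2 * (((X (i0.succAbove j)).card : ℝ) - 1)
              * (((Y (i0.succAbove j)).card : ℝ) - 1)) := by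
      rcases Nat.eq_zero_or_pos r' with h0 | h0
      · subst h0
        have huniq : ∀ w : V, ¬ w ∈ S → w = v := by
          intro w hw
          obtain ⟨i, hi⟩ := hG.covers w
          have : i = i0 := Fin.ext (by omega)
          exact hveq w (this ▸ hi) hw
        have hcard1 : Fintype.card {w : V // ¬ w ∈ S} = 1 :=
          Fintype.card_eq_one_iff.mpr ⟨⟨v, hvS⟩, fun b => Subtype.ext (huniq ↑b b.2)⟩
        rw [Matrix.det_eq_elem_of_card_eq_one hcard1 ⟨v, hvS⟩, hcard1]
        show q ^ G.dist v v = _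
        simp [SimpleGraph.dist_self]
      · -- apply the induction hypothesis
        set X' : Fin r' → Finset {w : V // ¬ w ∈ S} :=
          fun j => (X (i0.succAbove j)).subtype (fun w => ¬ w ∈ S) with hX'def
        set Y' : Fin r' → Finset {w : V // ¬ w ∈ S} :=
          fun j => (Y (i0.succAbove j)).subtype (fun w => ¬ w ∈ S) with hY'def
        have hmemX' : ∀ (j) (a : {w : V // ¬ w ∈ S}),
            a ∈ X' j ↔ (a : V) ∈ X (i0.succAbove j) := fun j a => Finset.mem_subtype
        have hmemY' : ∀ (j) (a : {w : V // ¬ w ∈ S}),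
            a ∈ Y' j ↔ (a : V) ∈ Y (i0.succAbove j) := fun j a => Finset.mem_subtype
        have hX'card : ∀ j, (X' j).card = (X (i0.succAbove j)).card := by
          intro j
          rw [hX'def, Finset.card_subtype]
          congr 1
          exact Finset.filter_true_of_mem (fun w hw =>
            hnotS _ (Fin.succAbove_ne i0 j) w (Finset.mem_union_left _ hw))
        have hY'card : ∀ j, (Y' j).card = (Y (i0.succAbove j)).card := by
          intro j
          rw [hY'def, Finset.card_subtype]
          congr 1
          exact Finset.filter_true_of_mem (fun w hw =>
            hnotS _ (Fin.succAbove_ne i0 j) w (Finset.mem_union_right _ hw))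
        have hunion : ∀ j, X' j ∪ Y' j
            = (X (i0.succAbove j) ∪ Y (i0.succAbove j)).subtype (fun w => ¬ w ∈ S) := by
          intro j
          ext a
          simp [hX'def, hY'def, Finset.mem_subtype]
        have hG' : IsBiBlockGraph G' r' X' Y' := by
          constructor
          · exact hG'conn
          · intro j
            obtain ⟨x, hx⟩ := hG.nonemptyX (i0.succAbove j)
            have hxs : ¬ x ∈ S :=
              hnotS _ (Fin.succAbove_ne i0 j) x (Finset.mem_union_left _ hx)
            exact ⟨⟨x, hxs⟩, (hmemX' j _).mpr hx⟩
          · intro j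
            obtain ⟨y, hy⟩ := hG.nonemptyY (i0.succAbove j)
            have hys : ¬ y ∈ S :=
              hnotS _ (Fin.succAbove_ne i0 j) y (Finset.mem_union_right _ hy)
            exact ⟨⟨y, hys⟩, (hmemY' j _).mpr hy⟩
          · intro j
            rw [Finset.disjoint_left]
            intro a ha hb
            exact (Finset.disjoint_left.mp (hG.disjointXY (i0.succAbove j)))
              ((hmemX' j a).mp ha) ((hmemY' j a).mp hb)
          · intro a b
            constructor
            · intro hadj
              have hadj' : G.Adj ↑a ↑b := hadj
              obtain ⟨i, hi⟩ := (hG.adj_iff ↑a ↑b).mp hadj'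
              have hne : i ≠ i0 := by
                intro hii
                have haB : (a : V) ∈ X i ∪ Y i := by
                  rcases hi with ⟨h1, _⟩ | ⟨h1, _⟩
                  · exact Finset.mem_union_left _ h1
                  · exact Finset.mem_union_right _ h1
                have hbB : (b : V) ∈ X i ∪ Y i := by
                  rcases hi with ⟨_, h2⟩ | ⟨_, h2⟩
                  · exact Finset.mem_union_right _ h2
                  · exact Finset.mem_union_left _ h2
                rw [hii] at haB hbB
                have hav := hveq _ haB a.2
                have hbv := hveq _ hbB b.2
                exact hadj'.ne (hav.trans hbv.symm)
              obtain ⟨k, hk⟩ := Fin.exists_succAbove_eq hne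
              refine ⟨k, ?_⟩
              rcases hi with ⟨h1, h2⟩ | ⟨h1, h2⟩
              · exact Or.inl ⟨(hmemX' k a).mpr (hk ▸ h1), (hmemY' k b).mpr (hk ▸ h2)⟩
              · exact Or.inr ⟨(hmemY' k a).mpr (hk ▸ h1), (hmemX' k b).mpr (hk ▸ h2)⟩
            · rintro ⟨j, hj⟩
              show G.Adj ↑a ↑b
              apply (hG.adj_iff ↑a ↑b).mpr
              refine ⟨i0.succAbove j, ?_⟩
              rcases hj with ⟨h1, h2⟩ | ⟨h1, h2⟩
              · exact Or.inl ⟨(hmemX' j a).mp h1, (hmemY' j b).mp h2⟩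
              · exact Or.inr ⟨(hmemY' j a).mp h1, (hmemX' j b).mp h2⟩
          · intro a
            obtain ⟨i, hi⟩ := hG.covers ↑a
            by_cases hne : i = i0
            · subst hne
              have hav : (a : V) = v := hveq _ hi a.2
              obtain ⟨j, hjne, hjm⟩ := hcut (by omega)
              obtain ⟨k, hk⟩ := Fin.exists_succAbove_eq hjne
              refine ⟨k, ?_⟩
              rw [hunion k, Finset.mem_subtype, hk]
              rw [hav]
              exact hjm
            · obtain ⟨k, hk⟩ := Fin.exists_succAbove_eq hne
              refine ⟨k, ?_⟩
              rw [hunion k, Finset.mem_subtype, hk]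
              exact hi
          · intro i j hij
            have hsub : (X' i ∪ Y' i) ∩ (X' j ∪ Y' j)
                = ((X (i0.succAbove i) ∪ Y (i0.succAbove i))
                    ∩ (X (i0.succAbove j) ∪ Y (i0.succAbove j))).subtype (fun w => ¬ w ∈ S) := by
              ext a
              simp [hunion, Finset.mem_subtype]
            rw [hsub, Finset.card_subtype]
            calc (((X (i0.succAbove i) ∪ Y (i0.succAbove i))
                    ∩ (X (i0.succAbove j) ∪ Y (i0.succAbove j))).filter (fun w => ¬ w ∈ S)).card
                ≤ ((X (i0.succAbove i) ∪ Y (i0.succAbove i))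
                    ∩ (X (i0.succAbove j) ∪ Y (i0.succAbove j))).card :=
                  Finset.card_filter_le _ _
              _ ≤ 1 := hG.inter_le_one _ _
                  (fun h => hij (Fin.succAbove_right_injective h))
          · have hsumsplit : ∑ i : Fin (r'+1), ((X i).card + (Y i).card)
                = ((X i0).card + (Y i0).card)
                  + ∑ j : Fin r', ((X (i0.succAbove j)).card + (Y (i0.succAbove j)).card) :=
              Fin.sum_univ_succAbove _ i0
            have hbig := hG.card_eq
            have hsum' : ∑ j : Fin r', ((X' j).card + (Y' j).card)
                = ∑ j : Fin r', ((X (i0.succAbove j)).card + (Y (i0.succAbove j)).card) :=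
              Finset.sum_congr rfl (fun j _ => by rw [hX'card j, hY'card j])
            rw [hsum']
            omega
        have hIH := ih G' X' Y' hG' q
        rw [hDmat, hIH]
        congr 1
        exact Finset.prod_congr rfl (fun j _ => by rw [hX'card j, hY'card j])
    -- assemble
    rw [hsplit, hAdet, hDdet]
    rw [Fin.prod_univ_succAbove
      (fun i => (1 - q^2 * (((X i).card : ℝ) - 1) * (((Y i).card : ℝ) - 1))) i0]
    have hexp : Fintype.card V - 1 = S.card + (Fintype.card {w : V // ¬ w ∈ S} - 1) := by
      omega
    rw [hexp, pow_add]
    ring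

/-- Determinant of the exponential distance matrix of a bi-block graph with blocks
`K_{m_i,n_i}`: `det 𝓕 = (1-q²)^(n-1) · ∏ᵢ (1 - q²(mᵢ-1)(nᵢ-1))`. -/
theorem det_expDistMatrix_biBlock {V : Type*} [Fintype V] [DecidableEq V]
    (G : SimpleGraph V) (r : ℕ) (X Y : Fin r → Finset V)
    (hG : IsBiBlockGraph G r X Y)
    (m n : Fin r → ℕ) (hm : ∀ i, (X i).card = m i) (hn : ∀ i, (Y i).card = n i)
    (N : ℕ) (hN : Fintype.card V = N)
    (q : ℝ) (hq0 : q ≠ 0) (hq1 : q ≠ 1) (hq1' : q ≠ -1) :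
    (expDistMatrix G q).det
      = (1 - q ^ 2) ^ (N - 1)
        * ∏ i, (1 - q ^ 2 * ((m i : ℝ) - 1) * ((n i : ℝ) - 1)) := by
  have := master_det r G X Y hG q
  rw [this, hN]
  congr 1
  exact Finset.prod_congr rfl (fun i _ => by rw [hm i, hn i])
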